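/- In the free noncommutative algebra over ℂ generated by symbols x, dx, d²x subject to the relations f·dx = dx·f and f·d²x = d²x·f + (j−1)(dx)² f' (for f a polynomial in x, f' its derivative), applying the j-Leibniz rule d³ ≡ 0 consistency forces the relations (dx)³ = 0 and dx·d²x = j·d²x·dx, where j is a primitive cube root of unity. -/
import Mathlib

open Polynomial

theorem stmt_11 (j : ℂ) (hj3 : j ^ 3 = 1) (hj1 : j ≠ 1)
    (Ω : Type*) [Ring Ω] [Algebra ℂ Ω]
    (H : Ω → ℤ → Prop)
    (d : Ω →ₗ[ℂ] Ω)
    (hdH : ∀ ω i, H ω i → H (d ω) (i + 1))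
    (hmulH : ∀ ω η i k, H ω i → H η k → H (ω * η) (i + k))
    (hLeib : ∀ (ω η : Ω) (i : ℤ), H ω i → d (ω * η) = d ω * η + j ^ i • (ω * d η))
    (hd3 : ∀ ω : Ω, d (d (d ω)) = 0)
    (x : Ω) (hx : H x 0)
    (hd0 : ∀ f : Polynomial ℂ,
      d (Polynomial.aeval x f) = d x * Polynomial.aeval x (Polynomial.derivative f))
    (hrel1 : ∀ f : Polynomial ℂ,
      Polynomial.aeval x f * d x = d x * Polynomial.aeval x f)
    (hrel2 : ∀ f : Polynomial ℂ,
      Polynomial.aeval x f * d (d x) =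
        d (d x) * Polynomial.aeval x f +
          (j - 1) • (d x * d x * Polynomial.aeval x (Polynomial.derivative f))) :
    d x * d x * d x = 0 ∧ d x * d (d x) = j • (d (d x) * d x) := by
  set a := d x with ha
  set b := d (d x) with hb
  have hjne0 : j ≠ 0 := by rintro rfl; simp at hj3
  have hj2 : j ^ 2 + j + 1 = 0 := by
    have h : (j - 1) * (j ^ 2 + j + 1) = 0 := by linear_combination hj3
    rcases mul_eq_zero.mp h with h' | h'
    · exact absurd (sub_eq_zero.mp h') hj1
    · exact h'
  have hz : ∀ m : Ω, (j ^ 2 + j + 1) • m = 0 := fun m => by rw [hj2, zero_smul]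
  have hz3 : ∀ m : Ω, (j ^ 3 - 1) • m = 0 := fun m => by
    rw [show j ^ 3 - 1 = 0 by rw [hj3]; ring, zero_smul]
  have Ha : H a 1 := by simpa using hdH x 0 hx
  have Hb : H b 2 := by simpa using hdH a 1 Ha
  have Hxx : H (x * x) 0 := by simpa using hmulH x x 0 0 hx hx
  have Haa : H (a * a) 2 := by simpa using hmulH a a 1 1 Ha Ha
  have hdb : d b = 0 := hd3 x
  have hp2 : j ^ (2:ℤ) = j * j := by
    rw [show (2:ℤ) = ((2:ℕ):ℤ) by norm_num, zpow_natCast]; ring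
  have eq1 : x * b = b * x + (j - 1) • (a * a) := by
    have := hrel2 X; simpa using this
  have eq2 : x * x * b = b * (x * x) + (j - 1) • (a * a * (x + x)) := by
    have := hrel2 (X * X); simpa using this
  have dxx : d (x * x) = a * (x + x) := by
    have := hd0 (X * X); simpa using this
  -- derivatives of products
  have dxb : d (x * b) = a * b := by
    have h := hLeib x b 0 hx
    rw [hdb, zpow_zero, one_smul, mul_zero, add_zero] at h
    exact h
  have dbx : d (b * x) = (j * j) • (b * a) := by
    have h := hLeib b x 2 Hb
    rw [hdb, hp2, zero_mul, zero_add] at h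
    exact h
  have daa : d (a * a) = b * a + j • (a * b) := by
    have h := hLeib a a 1 Ha
    rw [zpow_one] at h
    exact h
  -- first key relation
  have E : a * b = (j * j) • (b * a) + (j - 1) • (b * a + j • (a * b)) := by
    have h := congrArg d eq1
    rw [map_add, map_smul, dxb, dbx, daa] at h
    exact h
  have hab : a * b = j • (b * a) := by
    linear_combination (norm := module) (-(j/2)) • E + (1/2:ℂ) • hz (a*b) + (-(1/2):ℂ) • hz (b*a)
      + (-(1/2):ℂ) • hz3 (a*b) + (-(1/2):ℂ) • hz3 (b*a)
  refine ⟨?_, hab⟩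
  -- second key relation
  have dxxb : d (x * x * b) = a * (x + x) * b := by
    have h := hLeib (x * x) b 0 Hxx
    rw [hdb, zpow_zero, one_smul, mul_zero, add_zero, dxx] at h
    exact h
  have dbxx : d (b * (x * x)) = (j * j) • (b * (a * (x + x))) := by
    have h := hLeib b (x * x) 2 Hb
    rw [hdb, hp2, zero_mul, zero_add, dxx] at h
    exact h
  have daaxx : d (a * a * (x + x)) =
      (b * a + j • (a * b)) * (x + x) + (j * j) • (a * a * (a + a)) := by
    have h := hLeib (a * a) (x + x) 2 Haa
    rw [hp2, daa, map_add] at h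
    exact h
  have E2 : a * (x + x) * b =
      (j * j) • (b * (a * (x + x))) +
        (j - 1) • ((b * a + j • (a * b)) * (x + x) + (j * j) • (a * a * (a + a))) := by
    have h := congrArg d eq2
    rw [map_add, map_smul, dxxb, dbxx, daaxx] at h
    exact h
  -- expand products into atoms
  have eq1a : a * (x * b) = a * (b * x) + (j - 1) • (a * (a * a)) := by
    rw [eq1, mul_add, mul_smul_comm]
  have habx : a * (b * x) = j • (b * (a * x)) := by
    have h := congrArg (· * x) hab
    simpa [mul_assoc, smul_mul_assoc] using h
  have E2' : a * (x * b) + a * (x * b) =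
      (j * j) • (b * (a * x) + b * (a * x)) +
        (j - 1) • ((b * (a * x) + b * (a * x)) + j • (a * (b * x) + a * (b * x))
          + (j * j) • (a * (a * a) + a * (a * a))) := by
    have h := E2
    simp only [mul_add, add_mul, smul_mul_assoc, smul_add, mul_assoc] at h ⊢
    linear_combination (norm := module) h
  rw [eq1a, habx] at E2'
  have hα : (2 * (j - 1) * (1 - j ^ 2)) ≠ 0 := by
    have h1 : j - 1 ≠ 0 := sub_ne_zero.mpr hj1
    have h2 : 1 - j ^ 2 ≠ 0 := by
      intro h
      have h2' : j ^ 2 = 1 := by linear_combination -h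
      exact hj1 (by linear_combination hj3 - j * h2')
    simp [h1, h2]
  have F : (2 * (j - 1) * (1 - j ^ 2)) • (a * (a * a)) = 0 := by
    linear_combination (norm := module) E2' + (2:ℂ) • hz3 (b * (a * x))
  have hA : a * (a * a) = 0 := (smul_eq_zero.mp F).resolve_left hα
  rw [mul_assoc]
  exact hA
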